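/- arXiv:1408.5742 — 7 statements merged into one kernel-verified Lean document; each statement's English description precedes it below -/
import Mathlib

section
/- Let K be a field and n₁, n₂ positive integers. For an invertible matrix g ∈ GL(n₁+n₂, K), written in blocks g = fromBlocks A B C D (A of size n₁×n₁, D of size n₂×n₂), define the linear endomorphism T_g of the space of n₂×n₁ matrices by T_g(X) = lower-left block of g · (fromBlocks 0 0 X 0) · g⁻¹. Then det(T_g) · det(g)^{n₂} = det(D)^{n₁+n₂}. -/
open Matrix

/-- For an invertible block matrix `g`, the endomorphism `T_g` of the space of
`l × m` matrices given by `X ↦` lower-left block of `g · (fromBlocks 0 0 X 0) · g⁻¹`. -/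
noncomputable def lowerLeftConj {K : Type*} [Field K] {m l : Type*} [Fintype m] [Fintype l]
    [DecidableEq m] [DecidableEq l] (g : Matrix (m ⊕ l) (m ⊕ l) K) :
    Matrix l m K →ₗ[K] Matrix l m K where
  toFun X := (g * fromBlocks 0 0 X 0 * g⁻¹).toBlocks₂₁
  map_add' X Y := by
    show (g * fromBlocks 0 0 (X + Y) 0 * g⁻¹).toBlocks₂₁
        = (g * fromBlocks 0 0 X 0 * g⁻¹).toBlocks₂₁ + (g * fromBlocks 0 0 Y 0 * g⁻¹).toBlocks₂₁
    have h : fromBlocks (0 : Matrix m m K) (0 : Matrix m l K) (X + Y) (0 : Matrix l l K)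
        = fromBlocks 0 0 X 0 + fromBlocks 0 0 Y 0 := by
      rw [Matrix.fromBlocks_add]; simp
    rw [h, Matrix.mul_add, Matrix.add_mul]
    ext i j
    simp [Matrix.toBlocks₂₁]
  map_smul' c X := by
    show (g * fromBlocks 0 0 (c • X) 0 * g⁻¹).toBlocks₂₁
        = c • (g * fromBlocks 0 0 X 0 * g⁻¹).toBlocks₂₁
    have h : fromBlocks (0 : Matrix m m K) (0 : Matrix m l K) (c • X) (0 : Matrix l l K)
        = c • fromBlocks 0 0 X 0 := by
      rw [Matrix.fromBlocks_smul]; simp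
    rw [h, Matrix.mul_smul, Matrix.smul_mul]
    ext i j
    simp [Matrix.toBlocks₂₁]

open Kronecker in
/-- The determinant of `X ↦ M * X * N` on `l × m` matrices. -/
lemma det_leftRightMul {K : Type*} [Field K] {m l : Type*} [Fintype m] [Fintype l]
    [DecidableEq m] [DecidableEq l] (M : Matrix l l K) (N : Matrix m m K)
    (T : Matrix l m K →ₗ[K] Matrix l m K) (hT : ∀ X, T X = M * X * N) :
    LinearMap.det T = M.det ^ (Fintype.card m) * N.det ^ (Fintype.card l) := by
  classical
  set b := Matrix.stdBasis K l m with hb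
  have key : Matrix.toLin b b (M ⊗ₖ Nᵀ) = T := by
    apply b.ext
    rintro ⟨i', j'⟩
    rw [Matrix.toLin_self, hT]
    ext a c
    rw [hb, Matrix.stdBasis_eq_single]
    simp only [Matrix.sum_apply, Matrix.smul_apply, Fintype.sum_prod_type,
      Matrix.kroneckerMap_apply, Matrix.stdBasis_eq_single, Matrix.transpose_apply,
      smul_eq_mul]
    rw [Finset.sum_eq_single a (by intro i _ hi; simp [Finset.sum_eq_zero, hi, Matrix.single, Matrix.single_apply_of_ne, fun j => (by simp [hi] : Matrix.single i j (1:K) a c = if i = a ∧ j = c then 1 else 0)]) (by simp)]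
    · rw [Finset.sum_eq_single c (by intro j _ hj; simp [Matrix.single, hj]) (by simp)]
      simp [Matrix.mul_apply, Matrix.single, Finset.sum_mul, ite_and, mul_comm]
  rw [← key, LinearMap.det_toLin, Matrix.det_kronecker, Matrix.det_transpose]

lemma det_toBlocks₁₁_inv {K : Type*} [Field K] {m l : Type*} [Fintype m] [Fintype l]
    [DecidableEq m] [DecidableEq l] (A : Matrix m m K) (B : Matrix m l K)
    (C : Matrix l m K) (D : Matrix l l K) (hg : IsUnit (fromBlocks A B C D).det) :
    ((fromBlocks A B C D)⁻¹.toBlocks₁₁).det * (fromBlocks A B C D).det = D.det := by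
  classical
  set g := fromBlocks A B C D with hgdef
  set gi := g⁻¹ with hgi
  have h1 : g * (gi * fromBlocks 1 0 0 0 + fromBlocks 0 0 0 1) = fromBlocks 1 B 0 D := by
    rw [Matrix.mul_add, ← Matrix.mul_assoc, Matrix.mul_nonsing_inv _ hg, one_mul, hgdef,
      Matrix.fromBlocks_multiply]
    simp only [Matrix.mul_one, Matrix.mul_zero, Matrix.zero_mul, Matrix.one_mul, add_zero, zero_add]
    rw [Matrix.fromBlocks_add]
    simp
  have h2 : gi * fromBlocks 1 0 0 0 + fromBlocks 0 0 0 1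
      = fromBlocks gi.toBlocks₁₁ 0 gi.toBlocks₂₁ 1 := by
    conv_lhs => rw [← Matrix.fromBlocks_toBlocks gi]
    rw [Matrix.fromBlocks_multiply]
    simp only [Matrix.mul_one, Matrix.mul_zero, Matrix.zero_mul, Matrix.one_mul, add_zero, zero_add]
    rw [Matrix.fromBlocks_add]
    simp
  have h3 := congrArg Matrix.det h1
  rw [h2, Matrix.det_mul, Matrix.det_fromBlocks_zero₁₂, Matrix.det_fromBlocks_zero₂₁] at h3
  simp only [Matrix.det_one, mul_one, one_mul] at h3
  rw [mul_comm] at h3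
  exact h3

/-- Example 1.4 (case `s = 2`) of the paper: for `g = fromBlocks A B C D ∈ GL(n₁+n₂, K)`,
the determinant of `T_g : X ↦` lower-left block of `g · (fromBlocks 0 0 X 0) · g⁻¹`
satisfies `det(T_g) · det(g)^{n₂} = det(D)^{n₁+n₂}`. -/
theorem det_lowerLeftConj_GL {K : Type*} [Field K] {n₁ n₂ : ℕ} (hn₁ : 0 < n₁) (hn₂ : 0 < n₂)
    (A : Matrix (Fin n₁) (Fin n₁) K) (B : Matrix (Fin n₁) (Fin n₂) K)
    (C : Matrix (Fin n₂) (Fin n₁) K) (D : Matrix (Fin n₂) (Fin n₂) K)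
    (hg : IsUnit (fromBlocks A B C D).det) :
    LinearMap.det (lowerLeftConj (fromBlocks A B C D)) * (fromBlocks A B C D).det ^ n₂
      = D.det ^ (n₁ + n₂) := by
  classical
  set g := fromBlocks A B C D with hgdef
  set A' := g⁻¹.toBlocks₁₁ with hA'
  have hTval : ∀ X : Matrix (Fin n₂) (Fin n₁) K, lowerLeftConj g X = D * X * A' := by
    intro X
    show (g * fromBlocks 0 0 X 0 * g⁻¹).toBlocks₂₁ = D * X * A'
    conv_lhs => rw [← Matrix.fromBlocks_toBlocks g⁻¹]
    rw [hgdef, Matrix.fromBlocks_multiply, Matrix.fromBlocks_multiply]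
    simp [Matrix.mul_assoc]
    rfl
  have hdet := det_leftRightMul D A' (lowerLeftConj g) hTval
  rw [hdet]
  have hAg := det_toBlocks₁₁_inv A B C D hg
  rw [← hA'] at hAg
  simp only [Fintype.card_fin]
  calc D.det ^ n₁ * A'.det ^ n₂ * g.det ^ n₂
      = D.det ^ n₁ * (A'.det * g.det) ^ n₂ := by ring
    _ = D.det ^ n₁ * D.det ^ n₂ := by rw [hAg]
    _ = D.det ^ (n₁ + n₂) := by rw [pow_add]
end

section
/- Let K be a field and n a positive integer. For g ∈ SL(n+1, K), written in blocks g = fromBlocks A B C d with A of size n×n, C a row vector of size 1×n, and d ∈ K the (n+1, n+1) entry, define the linear endomorphism T_g of the space of 1×n matrices by T_g(X) = lower-left (row) block of g · (fromBlocks 0 0 X 0) · g⁻¹. Then det(T_g) = d^{n+1}. -/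
open Matrix

/-- Right multiplication by `M` on row vectors, as a linear map. -/
noncomputable def rowMulRight {K : Type*} [Field K] {n : ℕ} (M : Matrix (Fin n) (Fin n) K) :
    Matrix (Fin 1) (Fin n) K →ₗ[K] Matrix (Fin 1) (Fin n) K where
  toFun X := X * M
  map_add' X Y := Matrix.add_mul X Y M
  map_smul' c X := Matrix.smul_mul c X M

lemma det_rowMulRight {K : Type*} [Field K] {n : ℕ} (M : Matrix (Fin n) (Fin n) K) :
    LinearMap.det (rowMulRight M) = M.det := by
  let e : Matrix (Fin 1) (Fin n) K ≃ₗ[K] (Fin n → K) :=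
    LinearEquiv.funUnique (Fin 1) K (Fin n → K)
  have h : e.conj (rowMulRight M) = Matrix.toLin' Mᵀ := by
    apply LinearMap.ext; intro v
    funext j
    show (Matrix.of (fun (_ : Fin 1) => v) * M) 0 j = _
    simp [e, rowMulRight, LinearEquiv.conj_apply, LinearEquiv.funUnique, Equiv.funUnique,
      Matrix.mulVec, Matrix.vecMul, dotProduct, Matrix.mul_apply, mul_comm]
  calc LinearMap.det (rowMulRight M) = LinearMap.det (e.conj (rowMulRight M)) :=
        (LinearMap.det_conj _ e).symm
    _ = Mᵀ.det := by rw [h, LinearMap.det_toLin']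
    _ = M.det := Matrix.det_transpose M

/-- Example 1.2 of the paper: for `g = fromBlocks A B C d ∈ SL(n+1, K)` (with `d` the
`1×1` lower-right block), the determinant of `T_g : X ↦` lower-left (row) block of
`g · (fromBlocks 0 0 X 0) · g⁻¹` equals `d^{n+1}`. -/
theorem det_lowerLeftConj_SL {K : Type*} [Field K] {n : ℕ} (hn : 0 < n)
    (A : Matrix (Fin n) (Fin n) K) (B : Matrix (Fin n) (Fin 1) K)
    (C : Matrix (Fin 1) (Fin n) K) (d : Matrix (Fin 1) (Fin 1) K)
    (hg : (fromBlocks A B C d).det = 1) :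
    LinearMap.det (lowerLeftConj (fromBlocks A B C d)) = d 0 0 ^ (n + 1) := by
  set g := fromBlocks A B C d with hgdef
  have hu : IsUnit g.det := by rw [hg]; exact isUnit_one
  set A' := (g⁻¹).toBlocks₁₁ with hA'
  set B' := (g⁻¹).toBlocks₁₂ with hB'
  set C' := (g⁻¹).toBlocks₂₁ with hC'
  set d' := (g⁻¹).toBlocks₂₂ with hd'
  have hinv : g⁻¹ = fromBlocks A' B' C' d' := (Matrix.fromBlocks_toBlocks _).symm
  have hgh : g * g⁻¹ = 1 := Matrix.mul_nonsing_inv g hu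
  rw [hgdef, hinv, Matrix.fromBlocks_multiply] at hgh
  have t11 : (1 : Matrix (Fin n ⊕ Fin 1) (Fin n ⊕ Fin 1) K).toBlocks₁₁ = 1 := by
    rw [← Matrix.fromBlocks_one, Matrix.toBlocks_fromBlocks₁₁]
  have t21 : (1 : Matrix (Fin n ⊕ Fin 1) (Fin n ⊕ Fin 1) K).toBlocks₂₁ = 0 := by
    rw [← Matrix.fromBlocks_one, Matrix.toBlocks_fromBlocks₂₁]
  have h11 : A * A' + B * C' = 1 := by
    have := congrArg Matrix.toBlocks₁₁ hgh; simpa [t11] using this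
  have h21 : C * A' + d * C' = 0 := by
    have := congrArg Matrix.toBlocks₂₁ hgh; simpa [t21] using this
  have key : g * fromBlocks A' 0 C' 1 = fromBlocks 1 B 0 d := by
    rw [hgdef, Matrix.fromBlocks_multiply]
    rw [h11, h21]; simp
  have hdetA' : A'.det = d 0 0 := by
    have hh := congrArg Matrix.det key
    rw [Matrix.det_mul, hg, one_mul, Matrix.det_fromBlocks_zero₁₂,
      Matrix.det_fromBlocks_zero₂₁] at hh
    simpa [Matrix.det_fin_one] using hh
  have hd : ∀ Y : Matrix (Fin 1) (Fin n) K, d * Y = d 0 0 • Y := by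
    intro Y; ext i j
    fin_cases i
    simp [Matrix.mul_apply, Fin.sum_univ_one]
  have hmap : lowerLeftConj g = d 0 0 • rowMulRight A' := by
    apply LinearMap.ext; intro X
    show (g * fromBlocks 0 0 X 0 * g⁻¹).toBlocks₂₁ = (d 0 0 • rowMulRight A') X
    have step : g * fromBlocks 0 0 X 0 * g⁻¹
        = fromBlocks (B * X * A') (B * X * B') (d * X * A') (d * X * B') := by
      rw [hinv]
      conv_lhs => rw [hgdef]
      rw [Matrix.fromBlocks_multiply, Matrix.fromBlocks_multiply]
      simp
    rw [step]
    show d * X * A' = (d 0 0 • rowMulRight A') X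
    rw [hd X, Matrix.smul_mul]
    rfl
  have hrank : Module.finrank K (Matrix (Fin 1) (Fin n) K) = n := by
    simp [Module.finrank_matrix]
  rw [hmap, LinearMap.det_smul, det_rowMulRight, hdetA', hrank, pow_succ]
end

section
/- Let K be a field, s a positive integer, and (n₁, …, n_s) a partition of n = n₁+⋯+n_s, so that indices 1 ≤ p ≤ n are partitioned into s consecutive blocks of sizes n₁, …, n_s; write blk(p) for the block index of p. Let l ∈ GL(n, K) be block-diagonal, with i-th diagonal block l_{ii} ∈ GL(n_i, K). Let W be the subspace of M_n(K) of matrices supported on positions (p, q) with blk(p) > blk(q) (strictly block-lower-triangular matrices). Then conjugation X ↦ l X l⁻¹ maps W into W, and the determinant of the induced linear endomorphism of W equals ∏_{i=1}^{s} det(l_{ii})^{(n₁+⋯+n_{i−1}) − (n_{i+1}+⋯+n_s)}. -/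
open Matrix

/-- The subspace of strictly block-lower-triangular matrices for the partition of the
index set `(i : Fin s) × Fin (n i)` into blocks: matrices supported on positions `(p, q)`
with `blk(p) > blk(q)`. -/
def blockStrictLower (K : Type*) [Field K] {s : ℕ} (n : Fin s → ℕ) :
    Submodule K (Matrix ((i : Fin s) × Fin (n i)) ((i : Fin s) × Fin (n i)) K) where
  carrier := {X | ∀ p q : (i : Fin s) × Fin (n i), p.1 ≤ q.1 → X p q = 0}
  add_mem' := by
    intro a b ha hb p q h
    simp [Matrix.add_apply, ha p q h, hb p q h]
  zero_mem' := by
    intro p q _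
    rfl
  smul_mem' := by
    intro c a ha p q h
    simp [Matrix.smul_apply, ha p q h]

/-- Conjugation `X ↦ l X l⁻¹` as a linear endomorphism of the space of matrices. -/
noncomputable def conjLM {K : Type*} [Field K] {ι : Type*} [Fintype ι] [DecidableEq ι]
    (l : Matrix ι ι K) : Matrix ι ι K →ₗ[K] Matrix ι ι K where
  toFun X := l * X * l⁻¹
  map_add' X Y := by
    show l * (X + Y) * l⁻¹ = l * X * l⁻¹ + l * Y * l⁻¹
    rw [Matrix.mul_add, Matrix.add_mul]
  map_smul' c X := by
    show l * (c • X) * l⁻¹ = c • (l * X * l⁻¹)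
    rw [Matrix.mul_smul, Matrix.smul_mul]

namespace DetConjAux

variable {K : Type*} [Field K] {s : ℕ} {n : Fin s → ℕ}

/-- The index type of strictly lower blocks: pairs `(i, j)` with `j < i`. -/
abbrev P (s : ℕ) := {ij : Fin s × Fin s // ij.2 < ij.1}

/-- The index type for the basis of the strictly block-lower-triangular matrices. -/
abbrev Sig (n : Fin s → ℕ) := (k : P s) × (Fin (n k.1.1) × Fin (n k.1.2))

/-- Reading off the coordinates of a strictly block-lower-triangular matrix. -/
def phi (K : Type*) [Field K] (n : Fin s → ℕ) : blockStrictLower K n →ₗ[K] (Sig n → K) where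
  toFun X x := X.1 ⟨x.1.1.1, x.2.1⟩ ⟨x.1.1.2, x.2.2⟩
  map_add' X Y := rfl
  map_smul' c X := rfl

/-- Building a strictly block-lower-triangular matrix from coordinates. -/
def psiFun (c : Sig n → K) :
    Matrix ((i : Fin s) × Fin (n i)) ((i : Fin s) × Fin (n i)) K :=
  Matrix.of fun p q => if h : q.1 < p.1 then c ⟨⟨(p.1, q.1), h⟩, (p.2, q.2)⟩ else 0

lemma psiFun_mem (c : Sig n → K) : psiFun c ∈ blockStrictLower K n :=
  fun p q h => dif_neg h.not_gt

/-- `psiFun` as a linear map. -/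
def psi (K : Type*) [Field K] (n : Fin s → ℕ) : (Sig n → K) →ₗ[K] blockStrictLower K n where
  toFun c := ⟨psiFun c, psiFun_mem c⟩
  map_add' c d := Subtype.ext (by
    funext p q
    show psiFun (c + d) p q = (psiFun c + psiFun d) p q
    rw [Matrix.add_apply]
    by_cases h : q.1 < p.1 <;> simp [psiFun, h])
  map_smul' a c := Subtype.ext (by
    funext p q
    show psiFun (a • c) p q = (a • psiFun c) p q
    rw [Matrix.smul_apply]
    by_cases h : q.1 < p.1 <;> simp [psiFun, h])

/-- The coordinate linear equivalence. -/
def coordEquiv (K : Type*) [Field K] (n : Fin s → ℕ) :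
    blockStrictLower K n ≃ₗ[K] (Sig n → K) :=
  LinearEquiv.ofLinear (phi K n) (psi K n)
    (by
      apply LinearMap.ext; intro c; funext x
      show psiFun c ⟨x.1.1.1, x.2.1⟩ ⟨x.1.1.2, x.2.2⟩ = c x
      exact dif_pos x.1.2)
    (by
      apply LinearMap.ext; intro X
      apply Subtype.ext
      ext p q
      show (if h : q.1 < p.1 then X.1 ⟨p.1, p.2⟩ ⟨q.1, q.2⟩ else 0) = X.1 p q
      by_cases h : q.1 < p.1
      · rw [dif_pos h]
      · rw [dif_neg h]
        exact (X.2 p q (le_of_not_gt h)).symm)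

lemma psiFun_single (y : Sig n) :
    psiFun (fun y' => if y' = y then (1 : K) else 0) =
      Matrix.single ⟨y.1.1.1, y.2.1⟩ ⟨y.1.1.2, y.2.2⟩ 1 := by
  ext p q
  rw [Matrix.single, Matrix.of_apply, psiFun, Matrix.of_apply]
  by_cases h : q.1 < p.1
  · rw [dif_pos h]
    have hiff : (⟨⟨(p.1, q.1), h⟩, (p.2, q.2)⟩ : Sig n) = y ↔
        ((⟨y.1.1.1, y.2.1⟩ : (i : Fin s) × Fin (n i)) = p ∧
          (⟨y.1.1.2, y.2.2⟩ : (i : Fin s) × Fin (n i)) = q) := by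
      constructor
      · rintro rfl; exact ⟨rfl, rfl⟩
      · rintro ⟨rfl, rfl⟩; rfl
    rw [if_congr hiff rfl rfl]
  · rw [dif_neg h, if_neg]
    rintro ⟨rfl, rfl⟩
    exact h y.1.2

lemma mul_std_mul {ι : Type*} [Fintype ι] [DecidableEq ι] (A B : Matrix ι ι K)
    (i j a b : ι) : (A * Matrix.single i j (1 : K) * B) a b = A a i * B j b := by
  rw [Matrix.mul_apply, Finset.sum_eq_single j]
  · rw [Matrix.mul_single_apply_same, mul_one]
  · intro v _ hv
    rw [Matrix.mul_single_apply_of_ne (hbj := hv), zero_mul]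
  · intro hj; exact absurd (Finset.mem_univ j) hj

/-- The block encoding map. -/
def r (k : P s) : ℕ := s * k.1.1 + k.1.2

lemma r_injective : Function.Injective (r (s := s)) := by
  intro k k' hkk
  have hs' : 0 < s := k.1.1.pos
  have hb : (k.1.2 : ℕ) < s := k.1.2.isLt
  have hb' : (k'.1.2 : ℕ) < s := k'.1.2.isLt
  have hdiv := congrArg (· / s) hkk
  have hmod := congrArg (· % s) hkk
  simp only [r, Nat.mul_add_div hs', Nat.mul_add_mod,
    Nat.div_eq_of_lt hb, Nat.div_eq_of_lt hb',
    Nat.mod_eq_of_lt hb, Nat.mod_eq_of_lt hb', add_zero] at hdiv hmod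
  exact Subtype.ext (Prod.ext (Fin.ext hdiv) (Fin.ext hmod))

/-- The fiber of `Sig n` over `k : P s`. -/
def fib (n : Fin s → ℕ) (k : P s) :
    (Fin (n k.1.1) × Fin (n k.1.2)) ≃ {x : Sig n // r x.1 = r k} where
  toFun a := ⟨⟨k, a⟩, rfl⟩
  invFun z := cast (congrArg (fun k' : P s => Fin (n k'.1.1) × Fin (n k'.1.2))
    (r_injective z.2)) z.1.2
  left_inv a := eq_of_heq (cast_heq _ _)
  right_inv z := by
    obtain ⟨⟨k', a⟩, hk'⟩ := z
    have hk : k' = k := r_injective hk'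
    subst hk
    exact Subtype.ext (congrArg (Sigma.mk k') (eq_of_heq (cast_heq _ _)))

end DetConjAux

open DetConjAux in
/-- Example 1.4 of the paper: for a block-diagonal `l ∈ GL(n, K)` with invertible diagonal
blocks `l_{ii} ∈ GL(n_i, K)`, conjugation `X ↦ l X l⁻¹` preserves the space `W` of strictly
block-lower-triangular matrices, and the determinant of the induced endomorphism of `W` is
`∏ i, det(l_{ii}) ^ ((n₁ + ⋯ + n_{i-1}) - (n_{i+1} + ⋯ + n_s))`. -/
theorem det_conj_blockStrictLower {K : Type*} [Field K] {s : ℕ} (hs : 0 < s)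
    (n : Fin s → ℕ) (hn : ∀ i, 0 < n i)
    (lb : ∀ i, Matrix (Fin (n i)) (Fin (n i)) K) (hlb : ∀ i, IsUnit (lb i).det) :
    ∃ h : ∀ X ∈ blockStrictLower K n,
        conjLM (Matrix.blockDiagonal' lb) X ∈ blockStrictLower K n,
      LinearMap.det ((conjLM (Matrix.blockDiagonal' lb)).restrict h)
        = ∏ i, (lb i).det
            ^ ((∑ j ∈ Finset.Iio i, (n j : ℤ)) - ∑ j ∈ Finset.Ioi i, (n j : ℤ)) := by
  classical
  set l := Matrix.blockDiagonal' lb with hl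
  -- the inverse is block diagonal
  have hinv : l⁻¹ = Matrix.blockDiagonal' (fun i => (lb i)⁻¹) := by
    apply Matrix.inv_eq_right_inv
    rw [hl, ← Matrix.blockDiagonal'_mul]
    rw [show (fun k => lb k * (lb k)⁻¹) = fun _ => 1 from
      funext fun k => Matrix.mul_nonsing_inv _ (hlb k)]
    exact Matrix.blockDiagonal'_one
  -- conjugation preserves the subspace
  have h : ∀ X ∈ blockStrictLower K n, conjLM l X ∈ blockStrictLower K n := by
    intro X hX p q hpq
    show (l * X * l⁻¹) p q = 0
    rw [Matrix.mul_apply]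
    apply Finset.sum_eq_zero
    intro v _
    by_cases hv : v.1 = q.1
    · have : (l * X) p v = 0 := by
        rw [Matrix.mul_apply]
        apply Finset.sum_eq_zero
        intro u _
        by_cases hu : p.1 = u.1
        · have : X u v = 0 := hX u v (by rw [← hu, hv]; exact hpq)
          rw [this, mul_zero]
        · rw [hl, Matrix.blockDiagonal'_apply, dif_neg hu, zero_mul]
      rw [this, zero_mul]
    · rw [hinv, Matrix.blockDiagonal'_apply, dif_neg hv, mul_zero]
  refine ⟨h, ?_⟩
  set f := (conjLM l).restrict h with hf
  set e := coordEquiv K n with he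
  set g := (e : blockStrictLower K n →ₗ[K] (Sig n → K)) ∘ₗ f ∘ₗ
    (e.symm : (Sig n → K) →ₗ[K] blockStrictLower K n) with hg
  rw [← LinearMap.det_conj f e, ← LinearMap.det_toMatrix' g]
  set B := LinearMap.toMatrix' g with hB
  set d : Fin s → K := fun i => (lb i).det with hd
  -- entries of B
  have hBapp : ∀ x y : Sig n, B x y =
      l ⟨x.1.1.1, x.2.1⟩ ⟨y.1.1.1, y.2.1⟩ * l⁻¹ ⟨y.1.1.2, y.2.2⟩ ⟨x.1.1.2, x.2.2⟩ := by
    intro x y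
    rw [hB, LinearMap.toMatrix'_apply, hg]
    have h1 : (e.symm : (Sig n → K) →ₗ[K] blockStrictLower K n)
        (fun y' => if y' = y then (1 : K) else 0) =
        ⟨psiFun (fun y' => if y' = y then (1 : K) else 0), psiFun_mem _⟩ := by
      rw [he]; rfl
    rw [show (Pi.single y (1 : K) : Sig n → K) = fun y' => if y' = y then (1 : K) else 0 from
      by funext y'; rw [Pi.single_apply]]
    rw [LinearMap.comp_apply, LinearMap.comp_apply, h1]
    show (l * psiFun (fun y' => if y' = y then (1 : K) else 0) * l⁻¹)
      ⟨x.1.1.1, x.2.1⟩ ⟨x.1.1.2, x.2.2⟩ = _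
    rw [psiFun_single, mul_std_mul]
  -- B is block triangular for the encoding `r ∘ Sigma.fst`
  have hTri : B.BlockTriangular (fun x : Sig n => r x.1) := by
    intro x y hxy
    have hne : x.1 ≠ y.1 := by
      intro hxe
      have hlt : r y.1 < r x.1 := hxy
      rw [hxe] at hlt
      exact lt_irrefl _ hlt
    rw [hBapp]
    by_cases h1 : x.1.1.1 = y.1.1.1
    · have h2 : x.1.1.2 ≠ y.1.1.2 := by
        intro h2
        exact hne (Subtype.ext (Prod.ext h1 h2))
      rw [hinv, Matrix.blockDiagonal'_apply, dif_neg (fun hh => h2 hh.symm), mul_zero]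
    · rw [hl, Matrix.blockDiagonal'_apply, dif_neg h1, zero_mul]
  rw [hTri.det]
  -- the image of the encoding map
  have himg : Finset.univ.image (fun x : Sig n => r x.1) =
      Finset.univ.image (r (s := s)) := by
    apply Finset.ext
    intro a
    simp only [Finset.mem_image, Finset.mem_univ, true_and]
    constructor
    · rintro ⟨x, rfl⟩; exact ⟨x.1, rfl⟩
    · rintro ⟨k, rfl⟩; exact ⟨⟨k, (⟨0, hn _⟩, ⟨0, hn _⟩)⟩, rfl⟩
  rw [himg, Finset.prod_image (fun k _ k' _ hkk => r_injective hkk)]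
  -- each diagonal block is a Kronecker product
  have hblock : ∀ k : P s, (B.toSquareBlock (fun x : Sig n => r x.1) (r k)).det
      = d k.1.1 ^ n k.1.2 * (d k.1.2)⁻¹ ^ n k.1.1 := by
    intro k
    rw [← Matrix.det_submatrix_equiv_self (fib n k)]
    have : (B.toSquareBlock (fun x : Sig n => r x.1) (r k)).submatrix (fib n k) (fib n k)
        = kroneckerMap (· * ·) (lb k.1.1) ((lb k.1.2)⁻¹)ᵀ := by
      ext p p'
      rw [Matrix.submatrix_apply, Matrix.toSquareBlock_def]
      show B ⟨k, p⟩ ⟨k, p'⟩ = _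
      rw [hBapp, hinv]
      show Matrix.blockDiagonal' lb ⟨k.1.1, p.1⟩ ⟨k.1.1, p'.1⟩ *
        Matrix.blockDiagonal' (fun i => (lb i)⁻¹) ⟨k.1.2, p'.2⟩ ⟨k.1.2, p.2⟩ = _
      rw [Matrix.blockDiagonal'_apply_eq, Matrix.blockDiagonal'_apply_eq]
      rfl
    rw [this]
    rw [Matrix.det_kronecker, Matrix.det_transpose, Matrix.det_nonsing_inv,
      Ring.inverse_eq_inv]
    simp [hd]
  simp_rw [fun k : P s => hblock k]
  -- final combinatorial identity
  have hsub : ∀ i : Fin s, Finset.univ.filter (fun j : Fin s => j < i) = Finset.Iio i := by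
    intro i; ext j; simp
  have hsub' : ∀ j : Fin s, Finset.univ.filter (fun i : Fin s => j < i) = Finset.Ioi j := by
    intro j; ext i; simp
  have key : (∏ k : P s, d k.1.1 ^ n k.1.2 * (d k.1.2)⁻¹ ^ n k.1.1)
      = ∏ i, (d i ^ ∑ j ∈ Finset.Iio i, n j) * ((d i)⁻¹ ^ ∑ j ∈ Finset.Ioi i, n j) := by
    rw [← Finset.prod_subtype
      (Finset.univ.filter (fun ij : Fin s × Fin s => ij.2 < ij.1))
      (fun ij => by simp) (fun ij : Fin s × Fin s => d ij.1 ^ n ij.2 * (d ij.2)⁻¹ ^ n ij.1)]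
    rw [Finset.prod_filter, Fintype.prod_prod_type]
    have hsplit : ∀ (i j : Fin s),
        (if j < i then d i ^ n j * (d j)⁻¹ ^ n i else 1)
          = (if j < i then d i ^ n j else 1) * (if j < i then (d j)⁻¹ ^ n i else 1) := by
      intro i j; split <;> simp
    simp_rw [hsplit]
    simp_rw [Finset.prod_mul_distrib]
    congr 1
    · apply Finset.prod_congr rfl
      intro i _
      rw [← Finset.prod_filter, hsub i, Finset.prod_pow_eq_pow_sum]
    · rw [Finset.prod_comm]
      apply Finset.prod_congr rfl
      intro j _
      rw [← Finset.prod_filter, hsub' j, Finset.prod_pow_eq_pow_sum]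
  rw [key]
  apply Finset.prod_congr rfl
  intro i _
  have hdne : d i ≠ 0 := (hlb i).ne_zero
  rw [zpow_sub₀ hdne, div_eq_mul_inv, ← Nat.cast_sum, ← Nat.cast_sum,
    zpow_natCast, zpow_natCast, inv_pow]
end

section
/- Let K be a field, n a positive integer, J = fromBlocks 0 I_n (−I_n) 0, and let Sp(2n, K) = {g ∈ GL(2n, K) : gᵀ J g = J}. Let g ∈ Sp(2n, K) be written in blocks g = fromBlocks A B C D with n×n blocks. Then: (1) for every symmetric S ∈ M_n(K), the lower-left n×n block of g · (fromBlocks 0 0 S 0) · g⁻¹ is again symmetric; (2) the determinant of the induced linear endomorphism T_g of Sym(n, K), T_g(S) = lower-left block of g · (fromBlocks 0 0 S 0) · g⁻¹, equals det(D)^{n+1}. -/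
open Matrix

/-- The standard symplectic form matrix `J = fromBlocks 0 I (-I) 0`. -/
def sympJ (K : Type*) [Field K] (n : ℕ) : Matrix (Fin n ⊕ Fin n) (Fin n ⊕ Fin n) K :=
  fromBlocks 0 1 (-1) 0

/-- The subspace of symmetric `n × n` matrices over `K`. -/
def symMatrices (K : Type*) [Field K] (n : ℕ) : Submodule K (Matrix (Fin n) (Fin n) K) where
  carrier := {S | S.IsSymm}
  add_mem' := by
    intro a b ha hb
    exact Matrix.IsSymm.add ha hb
  zero_mem' := Matrix.isSymm_zero
  smul_mem' := by
    intro c a ha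
    simpa [Matrix.IsSymm, Matrix.transpose_smul] using congrArg (c • ·) ha

namespace Ex15
variable {K : Type*} [Field K] {n : ℕ}

abbrev Idx (n : ℕ) := {p : Fin n × Fin n // p.1 ≤ p.2}

noncomputable def symEquivFun (K : Type*) [Field K] (n : ℕ) :
    symMatrices K n ≃ₗ[K] (Idx n → K) where
  toFun S p := S.1 p.1.1 p.1.2
  map_add' S T := rfl
  map_smul' c S := rfl
  invFun f := ⟨Matrix.of fun i j =>
      if h : i ≤ j then f ⟨(i, j), h⟩ else f ⟨(j, i), le_of_not_ge h⟩, by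
    show Matrix.IsSymm _
    rw [Matrix.IsSymm]
    ext i j
    simp only [Matrix.transpose_apply, Matrix.of_apply]
    rcases le_or_gt i j with h | h
    · rcases eq_or_lt_of_le h with rfl | h'
      · rfl
      · rw [dif_neg (not_le_of_gt h'), dif_pos h]
    · rw [dif_pos h.le, dif_neg (not_le_of_gt h)]⟩
  left_inv S := by
    apply Subtype.ext
    ext i j
    simp only [Matrix.of_apply]
    split_ifs with h
    · rfl
    · have hs : (S : Matrix (Fin n) (Fin n) K).IsSymm := S.2
      exact (congrFun (congrFun hs j) i).symm
  right_inv f := by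
    funext p
    simp only [Matrix.of_apply, dif_pos p.2]

noncomputable def symBasis (K : Type*) [Field K] (n : ℕ) :
    Module.Basis (Idx n) K (symMatrices K n) :=
  Module.Basis.ofEquivFun (symEquivFun K n)

/-- The congruence map `S ↦ M S Mᵀ` on symmetric matrices. -/
def congrMap (M : Matrix (Fin n) (Fin n) K) : symMatrices K n →ₗ[K] symMatrices K n where
  toFun S := ⟨M * S.1 * Mᵀ, by
    have hs : (S : Matrix (Fin n) (Fin n) K).IsSymm := S.2
    show Matrix.IsSymm _
    rw [Matrix.IsSymm] at hs ⊢
    rw [Matrix.transpose_mul, Matrix.transpose_mul, Matrix.transpose_transpose, hs,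
      Matrix.mul_assoc]⟩
  map_add' S T := by
    apply Subtype.ext
    show M * (S.1 + T.1) * Mᵀ = M * S.1 * Mᵀ + M * T.1 * Mᵀ
    rw [Matrix.mul_add, Matrix.add_mul]
  map_smul' c S := by
    apply Subtype.ext
    show M * (c • S.1) * Mᵀ = c • (M * S.1 * Mᵀ)
    rw [Matrix.mul_smul, Matrix.smul_mul]

lemma congrMap_mul (M N : Matrix (Fin n) (Fin n) K) :
    congrMap (M * N) = (congrMap M ∘ₗ congrMap N : symMatrices K n →ₗ[K] symMatrices K n) := by
  refine LinearMap.ext fun S => Subtype.ext ?_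
  show (M * N) * S.1 * (M * N)ᵀ = M * (N * S.1 * Nᵀ) * Mᵀ
  rw [Matrix.transpose_mul]
  simp only [Matrix.mul_assoc]

lemma congrMap_one : (congrMap 1 : symMatrices K n →ₗ[K] symMatrices K n) = LinearMap.id := by
  refine LinearMap.ext fun S => Subtype.ext ?_
  show (1 : Matrix (Fin n) (Fin n) K) * S.1 * (1 : Matrix (Fin n) (Fin n) K)ᵀ = S.1
  simp

lemma prod_idx (d : Fin n → K) :
    (∏ q : Idx n, (d q.1.1 * d q.1.2)) = (∏ i, d i) ^ (n + 1) := by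
  classical
  have h1 : (∏ q : Idx n, (d q.1.1 * d q.1.2))
      = ∏ p ∈ Finset.univ.filter (fun p : Fin n × Fin n => p.1 ≤ p.2), d p.1 * d p.2 :=
    (Finset.prod_subtype (Finset.univ.filter (fun p : Fin n × Fin n => p.1 ≤ p.2))
      (fun p => by simp) (fun p => d p.1 * d p.2)).symm
  have hIci : ∀ i : Fin n, (Finset.univ.filter (fun j => i ≤ j)) = Finset.Ici i := by
    intro i; ext j; simp
  have hIic : ∀ j : Fin n, (Finset.univ.filter (fun i : Fin n => i ≤ j)) = Finset.Iic j := by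
    intro i; ext j; simp
  have h3 : ∀ i : Fin n, (∏ j, if i ≤ j then d i else 1) = d i ^ (n - (i : ℕ)) := by
    intro i
    rw [← Finset.prod_filter, Finset.prod_const, hIci i, Fin.card_Ici]
  have h4 : ∀ j : Fin n, (∏ i, if i ≤ j then d j else 1) = d j ^ ((j : ℕ) + 1) := by
    intro j
    rw [← Finset.prod_filter, Finset.prod_const, hIic j, Fin.card_Iic]
  calc (∏ q : Idx n, (d q.1.1 * d q.1.2))
      = ∏ p ∈ Finset.univ.filter (fun p : Fin n × Fin n => p.1 ≤ p.2), d p.1 * d p.2 := h1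
    _ = ∏ i, ∏ j, (if i ≤ j then d i * d j else 1) := by
        rw [Finset.prod_filter, Fintype.prod_prod_type]
    _ = (∏ i, ∏ j, if i ≤ j then d i else 1) * (∏ i, ∏ j, if i ≤ j then d j else 1) := by
        rw [← Finset.prod_mul_distrib]
        refine Finset.prod_congr rfl fun i _ => ?_
        rw [← Finset.prod_mul_distrib]
        refine Finset.prod_congr rfl fun j _ => ?_
        split_ifs <;> simp
    _ = (∏ i, d i ^ (n - (i : ℕ))) * (∏ j, d j ^ ((j : ℕ) + 1)) := by
        rw [Finset.prod_comm (f := fun i j : Fin n => if i ≤ j then d j else 1)]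
        exact congrArg₂ (· * ·) (Finset.prod_congr rfl fun i _ => h3 i)
          (Finset.prod_congr rfl fun j _ => h4 j)
    _ = ∏ i : Fin n, d i ^ (n + 1) := by
        rw [← Finset.prod_mul_distrib]
        refine Finset.prod_congr rfl fun i _ => ?_
        rw [← pow_add]
        congr 1
        have := i.isLt
        omega
    _ = (∏ i, d i) ^ (n + 1) := (Finset.prod_pow _ _ _)

lemma det_congrMap_diagonal (d : Fin n → K) :
    LinearMap.det (congrMap (Matrix.diagonal d) : symMatrices K n →ₗ[K] symMatrices K n)
      = (Matrix.diagonal d).det ^ (n + 1) := by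
  rw [← LinearMap.det_toMatrix (symBasis K n)]
  have hm : LinearMap.toMatrix (symBasis K n) (symBasis K n) (congrMap (Matrix.diagonal d))
      = Matrix.diagonal (fun q : Idx n => d q.1.1 * d q.1.2) := by
    ext q p
    rw [LinearMap.toMatrix_apply]
    rw [symBasis, Module.Basis.ofEquivFun_repr_apply, Module.Basis.coe_ofEquivFun]
    show (Matrix.diagonal d *
        (((symEquivFun K n).symm (Pi.single p 1) : symMatrices K n) : Matrix (Fin n) (Fin n) K)
        * (Matrix.diagonal d)ᵀ) q.1.1 q.1.2 = _
    rw [Matrix.diagonal_transpose, Matrix.mul_diagonal, Matrix.diagonal_mul]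
    have hq : (((symEquivFun K n).symm (Pi.single p 1) : symMatrices K n)
          : Matrix (Fin n) (Fin n) K) q.1.1 q.1.2
        = if q = p then 1 else 0 := by
      have h1 : (((symEquivFun K n).symm (Pi.single p 1) : symMatrices K n)
          : Matrix (Fin n) (Fin n) K) q.1.1 q.1.2 = (Pi.single p (1 : K) : Idx n → K) q := by
        show dite _ _ _ = _
        rw [dif_pos q.2]
      rw [h1, Pi.single_apply]
    rw [hq, Matrix.diagonal_apply]
    split_ifs with h
    · ring
    · ring
  rw [hm, Matrix.det_diagonal, prod_idx, Matrix.det_diagonal]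

open Polynomial in
lemma det_one_add_of_isNilpotent {ι : Type*} [Fintype ι] [DecidableEq ι]
    (M : Matrix ι ι K) (hM : IsNilpotent M) : (1 + M).det = 1 := by
  have hc : M.charpoly = X ^ (Fintype.card ι) := by
    have h := (Matrix.isNilpotent_charpoly_sub_pow_of_isNilpotent hM).eq_zero
    exact sub_eq_zero.mp h
  have he : M.charpoly.eval (-1) = (Matrix.scalar ι (-1) - M).det := by
    rw [Matrix.charpoly, _root_.eval_det, matPolyEquiv_charmatrix]
    simp
  have h2 : Matrix.scalar ι (-1) - M = -(1 + M) := by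
    rw [map_neg, _root_.map_one, neg_add]
    abel
  rw [hc] at he
  rw [h2, Matrix.det_neg] at he
  simp at he
  exact he

lemma det_congrMap_transvection (i j : Fin n) (hij : i ≠ j) (c : K) :
    LinearMap.det (congrMap (Matrix.transvection i j c)
      : symMatrices K n →ₗ[K] symMatrices K n) = 1 := by
  set E : Matrix (Fin n) (Fin n) K := Matrix.single i j c with hE
  have hEE : E * E = 0 := Matrix.single_mul_single_of_ne (c := c) i j i hij.symm c
  have hTT : Eᵀ * Eᵀ = 0 := by
    rw [← Matrix.transpose_mul, hEE, Matrix.transpose_zero]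
  have hL : ∀ X : Matrix (Fin n) (Fin n) K, E * (E * X) = 0 := fun X => by
    rw [← Matrix.mul_assoc, hEE, Matrix.zero_mul]
  -- the nilpotent part of the congruence map
  set N : symMatrices K n →ₗ[K] symMatrices K n :=
    { toFun := fun S => ⟨E * S.1 + S.1 * Eᵀ + E * S.1 * Eᵀ, by
        have hs : (S : Matrix (Fin n) (Fin n) K).IsSymm := S.2
        show Matrix.IsSymm _
        rw [Matrix.IsSymm] at hs ⊢
        rw [Matrix.transpose_add, Matrix.transpose_add, Matrix.transpose_mul,
          Matrix.transpose_mul, Matrix.transpose_mul, Matrix.transpose_mul,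
          Matrix.transpose_transpose, hs]
        rw [Matrix.mul_assoc]
        abel⟩
      map_add' := fun S T => by
        apply Subtype.ext
        show E * (S.1 + T.1) + (S.1 + T.1) * Eᵀ + E * (S.1 + T.1) * Eᵀ = _
        simp only [Matrix.mul_add, Matrix.add_mul]
        show _ = (E * S.1 + S.1 * Eᵀ + E * S.1 * Eᵀ) + (E * T.1 + T.1 * Eᵀ + E * T.1 * Eᵀ)
        abel
      map_smul' := fun r S => by
        apply Subtype.ext
        show E * (r • S.1) + (r • S.1) * Eᵀ + E * (r • S.1) * Eᵀ
          = r • (E * S.1 + S.1 * Eᵀ + E * S.1 * Eᵀ)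
        simp only [Matrix.mul_smul, Matrix.smul_mul, smul_add] } with hN
  have h1 : congrMap (Matrix.transvection i j c) = LinearMap.id + N := by
    refine LinearMap.ext fun S => Subtype.ext ?_
    show (1 + E) * S.1 * (1 + E)ᵀ = S.1 + (E * S.1 + S.1 * Eᵀ + E * S.1 * Eᵀ)
    rw [Matrix.transpose_add, Matrix.transpose_one]
    simp only [Matrix.mul_add, Matrix.add_mul, Matrix.one_mul, Matrix.mul_one]
    abel
  have hnil : IsNilpotent N := by
    refine ⟨3, ?_⟩
    refine LinearMap.ext fun S => Subtype.ext ?_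
    show (((N * N) * N) S : symMatrices K n).1 = ((0 : Module.End K (symMatrices K n)) S).1
    rw [Module.End.mul_apply, Module.End.mul_apply]
    show E * (N (N S)).1 + (N (N S)).1 * Eᵀ + E * (N (N S)).1 * Eᵀ = 0
    have key : ∀ T : symMatrices K n, ((N (N T)).1 : Matrix (Fin n) (Fin n) K)
        = E * T.1 * Eᵀ + E * T.1 * Eᵀ := by
      intro T
      show E * (E * T.1 + T.1 * Eᵀ + E * T.1 * Eᵀ) + (E * T.1 + T.1 * Eᵀ + E * T.1 * Eᵀ) * Eᵀ
          + E * (E * T.1 + T.1 * Eᵀ + E * T.1 * Eᵀ) * Eᵀ = _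
      simp only [Matrix.mul_add, Matrix.add_mul, Matrix.mul_assoc, hL, hTT,
        Matrix.mul_zero, Matrix.zero_mul, add_zero, zero_add]
    rw [key S]
    simp only [Matrix.mul_add, Matrix.add_mul, Matrix.mul_assoc, hL, hTT,
      Matrix.mul_zero, Matrix.zero_mul, add_zero, zero_add]
  have hTv : Matrix.transvection i j c = 1 + E := rfl
  rw [h1, ← LinearMap.det_toMatrix (symBasis K n), map_add, LinearMap.toMatrix_id]
  exact det_one_add_of_isNilpotent _
    (hnil.map (LinearMap.toMatrixAlgEquiv (symBasis K n)))

lemma det_congrMap (M : Matrix (Fin n) (Fin n) K) :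
    LinearMap.det (congrMap M : symMatrices K n →ₗ[K] symMatrices K n) = M.det ^ (n + 1) := by
  apply Matrix.diagonal_transvection_induction
    (P := fun M => LinearMap.det (congrMap M : symMatrices K n →ₗ[K] symMatrices K n)
      = M.det ^ (n + 1))
  · intro d _
    exact det_congrMap_diagonal d
  · intro t
    rcases t with ⟨ti, tj, hij, c⟩
    rw [Matrix.TransvectionStruct.toMatrix_mk, det_congrMap_transvection _ _ hij,
      Matrix.det_transvection_of_ne _ _ hij, one_pow]
  · intro P Q hP hQ
    rw [congrMap_mul, LinearMap.det_comp, hP, hQ, Matrix.det_mul, mul_pow]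

end Ex15

open Ex15 in
/-- Example 1.5 of the paper. -/
theorem det_lowerLeftConj_Sp {K : Type*} [Field K] {n : ℕ} (hn : 0 < n)
    (A B C D : Matrix (Fin n) (Fin n) K)
    (hsp : (fromBlocks A B C D)ᵀ * sympJ K n * fromBlocks A B C D = sympJ K n) :
    (∀ S : Matrix (Fin n) (Fin n) K, S.IsSymm →
      ((fromBlocks A B C D * fromBlocks 0 0 S 0 * (fromBlocks A B C D)⁻¹).toBlocks₂₁).IsSymm) ∧
    ∃ h : ∀ X ∈ symMatrices K n, lowerLeftConj (fromBlocks A B C D) X ∈ symMatrices K n,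
      LinearMap.det ((lowerLeftConj (fromBlocks A B C D)).restrict h) = D.det ^ (n + 1) := by
  classical
  set g := fromBlocks A B C D with hg
  have hone : (1 : Matrix (Fin n ⊕ Fin n) (Fin n ⊕ Fin n) K)
      = fromBlocks 1 0 0 1 := Matrix.fromBlocks_one.symm
  have hJJ : sympJ K n * sympJ K n = -1 := by
    rw [sympJ, Matrix.fromBlocks_multiply, hone, Matrix.fromBlocks_neg]
    congr 1 <;> simp
  have hginv : g⁻¹ = fromBlocks Dᵀ (-Bᵀ) (-Cᵀ) Aᵀ := by
    refine Matrix.inv_eq_left_inv ?_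
    have h0 : fromBlocks Dᵀ (-Bᵀ) (-Cᵀ) Aᵀ = (-(sympJ K n)) * (gᵀ * sympJ K n) := by
      rw [hg, Matrix.fromBlocks_transpose, sympJ, Matrix.fromBlocks_multiply,
        Matrix.fromBlocks_neg, Matrix.fromBlocks_multiply]
      congr 1 <;> simp
    rw [h0, Matrix.mul_assoc, hsp, Matrix.neg_mul, hJJ, neg_neg]
  have key : ∀ S : Matrix (Fin n) (Fin n) K,
      (g * fromBlocks 0 0 S 0 * g⁻¹).toBlocks₂₁ = D * S * Dᵀ := by
    intro S
    rw [hginv, hg, Matrix.fromBlocks_multiply, Matrix.fromBlocks_multiply,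
      Matrix.toBlocks_fromBlocks₂₁]
    simp [Matrix.mul_assoc]
  have part1 : ∀ S : Matrix (Fin n) (Fin n) K, S.IsSymm →
      ((g * fromBlocks 0 0 S 0 * g⁻¹).toBlocks₂₁).IsSymm := by
    intro S hS
    rw [key]
    rw [Matrix.IsSymm] at hS ⊢
    rw [Matrix.transpose_mul, Matrix.transpose_mul, Matrix.transpose_transpose, hS,
      Matrix.mul_assoc]
  refine ⟨part1, ?_⟩
  have hmem : ∀ X ∈ symMatrices K n, lowerLeftConj g X ∈ symMatrices K n := by
    intro X hX
    exact part1 X hX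
  refine ⟨hmem, ?_⟩
  have heq : (lowerLeftConj g).restrict hmem
      = (congrMap D : symMatrices K n →ₗ[K] symMatrices K n) := by
    refine LinearMap.ext fun S => Subtype.ext ?_
    show (g * fromBlocks 0 0 S.1 0 * g⁻¹).toBlocks₂₁ = D * S.1 * Dᵀ
    exact key S.1
  rw [heq, det_congrMap]
end

section
/- Let K be a field, n a positive integer, J = fromBlocks 0 I_n (−I_n) 0, and Sp(2n, K) = {g ∈ GL(2n, K) : gᵀ J g = J}. For g ∈ Sp(2n, K) written in blocks g = fromBlocks A B C D with n×n blocks, the following are equivalent: (i) det(D) ≠ 0; (ii) there exist a symmetric matrix Z ∈ Sym(n, K) and p ∈ Sp(2n, K) whose upper-right n×n block is zero, such that g = (fromBlocks I_n Z 0 I_n) · p. Moreover, when they hold, Z and p are uniquely determined by g. -/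
open Matrix

private lemma symp_u {K : Type*} [Field K] {n : ℕ} (Z : Matrix (Fin n) (Fin n) K)
    (hZ : Z.IsSymm) :
    (fromBlocks (1 : Matrix (Fin n) (Fin n) K) Z 0 1)ᵀ * sympJ K n *
      fromBlocks 1 Z 0 1 = sympJ K n := by
  rw [Matrix.IsSymm] at hZ
  simp [sympJ, fromBlocks_transpose, fromBlocks_multiply, hZ]

private lemma u_mul_u {K : Type*} [Field K] {n : ℕ} (Y Z : Matrix (Fin n) (Fin n) K) :
    fromBlocks (1 : Matrix (Fin n) (Fin n) K) Y (0 : Matrix (Fin n) (Fin n) K)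
        (1 : Matrix (Fin n) (Fin n) K) *
      fromBlocks (1 : Matrix (Fin n) (Fin n) K) Z (0 : Matrix (Fin n) (Fin n) K)
        (1 : Matrix (Fin n) (Fin n) K) =
      fromBlocks (1 : Matrix (Fin n) (Fin n) K) (Y + Z) (0 : Matrix (Fin n) (Fin n) K)
        (1 : Matrix (Fin n) (Fin n) K) := by
  simp [fromBlocks_multiply, add_comm]

private lemma u_mul_u_neg {K : Type*} [Field K] {n : ℕ} (Z : Matrix (Fin n) (Fin n) K) :
    fromBlocks (1 : Matrix (Fin n) (Fin n) K) Z (0 : Matrix (Fin n) (Fin n) K)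
        (1 : Matrix (Fin n) (Fin n) K) *
      fromBlocks (1 : Matrix (Fin n) (Fin n) K) (-Z) (0 : Matrix (Fin n) (Fin n) K)
        (1 : Matrix (Fin n) (Fin n) K) = 1 := by
  rw [u_mul_u, add_neg_cancel]
  exact fromBlocks_one

private lemma u_neg_mul_u {K : Type*} [Field K] {n : ℕ} (Z : Matrix (Fin n) (Fin n) K) :
    fromBlocks (1 : Matrix (Fin n) (Fin n) K) (-Z) (0 : Matrix (Fin n) (Fin n) K)
        (1 : Matrix (Fin n) (Fin n) K) *
      fromBlocks (1 : Matrix (Fin n) (Fin n) K) Z (0 : Matrix (Fin n) (Fin n) K)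
        (1 : Matrix (Fin n) (Fin n) K) = 1 := by
  rw [u_mul_u, neg_add_cancel]
  exact fromBlocks_one

/-- The Siegel parabolic big cell for `Sp(2n, K)` (Lemma 1.1 (3),(4) and Example 1.5 of the
paper): `g = fromBlocks A B C D ∈ Sp(2n, K)` has `det D ≠ 0` iff it factors as
`g = (fromBlocks 1 Z 0 1) · p` with `Z` symmetric and `p ∈ Sp(2n, K)` with vanishing
upper-right block; moreover such a factorization is unique. -/
theorem bigCell_Sp {K : Type*} [Field K] {n : ℕ} (hn : 0 < n)
    (A B C D : Matrix (Fin n) (Fin n) K)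
    (hsp : (fromBlocks A B C D)ᵀ * sympJ K n * fromBlocks A B C D = sympJ K n) :
    (IsUnit D.det ↔
      ∃ (Z : Matrix (Fin n) (Fin n) K) (p : Matrix (Fin n ⊕ Fin n) (Fin n ⊕ Fin n) K),
        Z.IsSymm ∧ pᵀ * sympJ K n * p = sympJ K n ∧ p.toBlocks₁₂ = 0 ∧
          fromBlocks A B C D = fromBlocks 1 Z 0 1 * p) ∧
    (∀ (Z Z' : Matrix (Fin n) (Fin n) K) (p p' : Matrix (Fin n ⊕ Fin n) (Fin n ⊕ Fin n) K),
      Z.IsSymm → pᵀ * sympJ K n * p = sympJ K n → p.toBlocks₁₂ = 0 →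
      Z'.IsSymm → p'ᵀ * sympJ K n * p' = sympJ K n → p'.toBlocks₁₂ = 0 →
      fromBlocks A B C D = fromBlocks 1 Z 0 1 * p →
      fromBlocks A B C D = fromBlocks 1 Z' 0 1 * p' →
      Z = Z' ∧ p = p') := by
  -- extract the block relations from hsp
  have hsp' := hsp
  rw [sympJ, fromBlocks_transpose, Matrix.mul_assoc, fromBlocks_multiply,
    fromBlocks_multiply, fromBlocks_inj] at hsp'
  obtain ⟨h11, h12, h21, h22⟩ := hsp'
  -- key fact: a factorization forces D invertible and Z = B * D⁻¹
  have key : ∀ (Z : Matrix (Fin n) (Fin n) K)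
      (p : Matrix (Fin n ⊕ Fin n) (Fin n ⊕ Fin n) K),
      pᵀ * sympJ K n * p = sympJ K n → p.toBlocks₁₂ = 0 →
      fromBlocks A B C D = fromBlocks 1 Z 0 1 * p →
      IsUnit D.det ∧ Z = B * D⁻¹ := by
    intro Z p hp hp12 hfac
    have hpb : p = fromBlocks p.toBlocks₁₁ 0 p.toBlocks₂₁ p.toBlocks₂₂ := by
      rw [← hp12, fromBlocks_toBlocks]
    set P := p.toBlocks₁₁; set Q := p.toBlocks₂₁; set R := p.toBlocks₂₂
    rw [hpb] at hp hfac
    rw [sympJ, fromBlocks_transpose, Matrix.mul_assoc, fromBlocks_multiply,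
      fromBlocks_multiply, fromBlocks_inj] at hp
    obtain ⟨hp11, hp12', hp21, hp22⟩ := hp
    rw [fromBlocks_multiply, fromBlocks_inj] at hfac
    obtain ⟨hA, hB, hC, hD⟩ := hfac
    have hPR : Pᵀ * R = 1 := by simpa using hp12'
    have hDR : D = R := by simpa using hD
    have hDet : IsUnit D.det := by
      rw [hDR]; exact Matrix.isUnit_det_of_left_inverse hPR
    refine ⟨hDet, ?_⟩
    have hBR : B = Z * R := by simpa using hB
    rw [hBR, hDR, Matrix.mul_assoc, Matrix.mul_nonsing_inv _ (hDR ▸ hDet), Matrix.mul_one]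
  constructor
  · constructor
    · intro hD
      -- forward direction
      have hBDsym : Bᵀ * D = Dᵀ * B := by
        have h := h22
        simp only [Matrix.mul_zero, Matrix.mul_neg, Matrix.mul_one, zero_add, add_zero,
          Matrix.zero_mul, Matrix.neg_mul, Matrix.one_mul] at h
        -- h : Bᵀ * D + -(Dᵀ * B) = 0
        have h' : Bᵀ * D - Dᵀ * B = 0 := by rw [sub_eq_add_neg]; exact h
        exact sub_eq_zero.mp h'
      have hDT : IsUnit Dᵀ.det := by simpa using hD
      set Z := B * D⁻¹ with hZdef
      have hZsym : Z.IsSymm := by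
        rw [Matrix.IsSymm]
        calc Zᵀ = Dᵀ⁻¹ * Bᵀ := by
              rw [hZdef, Matrix.transpose_mul, Matrix.transpose_nonsing_inv]
          _ = Dᵀ⁻¹ * Bᵀ * (D * D⁻¹) := by rw [Matrix.mul_nonsing_inv _ hD, Matrix.mul_one]
          _ = Dᵀ⁻¹ * (Bᵀ * D) * D⁻¹ := by simp only [Matrix.mul_assoc]
          _ = Dᵀ⁻¹ * (Dᵀ * B) * D⁻¹ := by rw [hBDsym]
          _ = Dᵀ⁻¹ * Dᵀ * (B * D⁻¹) := by simp only [Matrix.mul_assoc]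
          _ = Z := by rw [Matrix.nonsing_inv_mul _ hDT, Matrix.one_mul, hZdef]
      refine ⟨Z, fromBlocks 1 (-Z) 0 1 * fromBlocks A B C D, hZsym, ?_, ?_, ?_⟩
      · have hu := symp_u (-Z) (by rw [Matrix.IsSymm] at hZsym ⊢; simp [hZsym])
        calc (fromBlocks 1 (-Z) 0 1 * fromBlocks A B C D)ᵀ * sympJ K n *
              (fromBlocks 1 (-Z) 0 1 * fromBlocks A B C D)
            = (fromBlocks A B C D)ᵀ *
                ((fromBlocks (1 : Matrix (Fin n) (Fin n) K) (-Z) 0 1)ᵀ * sympJ K n *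
                  fromBlocks 1 (-Z) 0 1) * fromBlocks A B C D := by
              rw [Matrix.transpose_mul]; noncomm_ring
          _ = sympJ K n := by rw [hu, hsp]
      · rw [fromBlocks_multiply]
        simp only [Matrix.one_mul, Matrix.neg_mul, Matrix.zero_mul, zero_add, add_zero,
          toBlocks_fromBlocks₁₂]
        rw [hZdef, Matrix.mul_assoc, Matrix.nonsing_inv_mul _ hD, Matrix.mul_one]
        simp
      · rw [← Matrix.mul_assoc, u_mul_u_neg, Matrix.one_mul]
    · rintro ⟨Z, p, hZ, hp, hp12, hfac⟩
      exact (key Z p hp hp12 hfac).1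
  · intro Z Z' p p' hZ hp hp12 hZ' hp' hp12' hfac hfac'
    have k1 := key Z p hp hp12 hfac
    have k2 := key Z' p' hp' hp12' hfac'
    have hZZ : Z = Z' := by rw [k1.2, k2.2]
    refine ⟨hZZ, ?_⟩
    have e1 : p = fromBlocks 1 (-Z) 0 1 * fromBlocks A B C D := by
      rw [hfac, ← Matrix.mul_assoc, u_neg_mul_u, Matrix.one_mul]
    have e2 : p' = fromBlocks 1 (-Z') 0 1 * fromBlocks A B C D := by
      rw [hfac', ← Matrix.mul_assoc, u_neg_mul_u, Matrix.one_mul]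
    rw [e1, e2, hZZ]
end

section
/- Let K be a field and n a positive integer. Let g = u · t · v ∈ GL(n, K), where u is upper-triangular unipotent, t is an invertible diagonal matrix with diagonal entries t₁, …, t_n, and v is lower-triangular unipotent. Let W be the subspace of M_n(K) of strictly lower-triangular matrices, and let π : M_n(K) → W be the projection along the span of the elementary matrices E_{pq} with p ≤ q. Then the determinant of the linear endomorphism X ↦ π(g X g⁻¹) of W equals ∏_{i>j} t_i t_j⁻¹. -/
open Matrix

/-- The subspace `W` of strictly lower-triangular `n × n` matrices. -/
def strictLower (K : Type*) [Field K] (n : ℕ) : Submodule K (Matrix (Fin n) (Fin n) K) where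
  carrier := {X | ∀ i j : Fin n, i ≤ j → X i j = 0}
  add_mem' := by
    intro a b ha hb i j h
    simp [Matrix.add_apply, ha i j h, hb i j h]
  zero_mem' := by
    intro i j _
    rfl
  smul_mem' := by
    intro c a ha i j h
    simp [Matrix.smul_apply, ha i j h]

/-- The projection `π` of `n × n` matrices onto the strictly lower-triangular part, along
the span of the elementary matrices `E_{pq}` with `p ≤ q`. -/
def lowerTrunc {K : Type*} [Field K] {n : ℕ} (M : Matrix (Fin n) (Fin n) K) :
    Matrix (Fin n) (Fin n) K :=
  Matrix.of fun i j => if j < i then M i j else 0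

/-- The endomorphism `X ↦ π (g X g⁻¹)` of the space of strictly lower-triangular
matrices, where `π` is the projection along the span of the `E_{pq}` with `p ≤ q`. -/
noncomputable def lowerConj {K : Type*} [Field K] {n : ℕ} (g : Matrix (Fin n) (Fin n) K) :
    strictLower K n →ₗ[K] strictLower K n where
  toFun X := ⟨lowerTrunc (g * (X : Matrix (Fin n) (Fin n) K) * g⁻¹), by
    intro i j h
    simp [lowerTrunc, not_lt.mpr h]⟩
  map_add' X Y := by
    apply Subtype.ext
    show lowerTrunc (g * ((X : Matrix (Fin n) (Fin n) K) + (Y : Matrix (Fin n) (Fin n) K)) * g⁻¹)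
        = lowerTrunc (g * (X : Matrix (Fin n) (Fin n) K) * g⁻¹)
          + lowerTrunc (g * (Y : Matrix (Fin n) (Fin n) K) * g⁻¹)
    rw [Matrix.mul_add, Matrix.add_mul]
    ext i j
    by_cases h : j < i <;>
      simp [lowerTrunc, Matrix.of_apply, Matrix.add_apply, h]
  map_smul' c X := by
    apply Subtype.ext
    show lowerTrunc (g * (c • (X : Matrix (Fin n) (Fin n) K)) * g⁻¹)
        = c • lowerTrunc (g * (X : Matrix (Fin n) (Fin n) K) * g⁻¹)
    rw [Matrix.mul_smul, Matrix.smul_mul]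
    ext i j
    by_cases h : j < i <;>
      simp [lowerTrunc, Matrix.of_apply, Matrix.smul_apply, h]

section Aux

variable {K : Type*} [Field K] {n : ℕ}

/-- Index type for the basis of strictly lower triangular matrices. -/
abbrev SLIdx (n : ℕ) := {p : Fin n × Fin n // p.2 < p.1}

def slEquiv (K : Type*) [Field K] (n : ℕ) :
    strictLower K n ≃ₗ[K] (SLIdx n → K) where
  toFun X p := (X : Matrix (Fin n) (Fin n) K) p.1.1 p.1.2
  map_add' X Y := by funext p; simp
  map_smul' c X := by funext p; simp
  invFun f := ⟨Matrix.of fun i j => if h : j < i then f ⟨(i, j), h⟩ else 0, by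
    intro i j hij
    simp [Matrix.of_apply, dif_neg (not_lt.mpr hij)]⟩
  left_inv X := by
    apply Subtype.ext
    ext i j
    show (if h : j < i then (X : Matrix (Fin n) (Fin n) K) i j else 0)
        = (X : Matrix (Fin n) (Fin n) K) i j
    by_cases h : j < i
    · rw [dif_pos h]
    · rw [dif_neg h, X.2 i j (le_of_not_gt h)]
  right_inv f := by
    funext p
    obtain ⟨⟨i, j⟩, h⟩ := p
    show (if h' : j < i then f ⟨(i, j), h'⟩ else 0) = _
    rw [dif_pos h]

@[simp] lemma slEquiv_apply (X : strictLower K n) (p : SLIdx n) :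
    slEquiv K n X p = (X : Matrix (Fin n) (Fin n) K) p.1.1 p.1.2 := rfl

noncomputable def slBasis (K : Type*) [Field K] (n : ℕ) : Module.Basis (SLIdx n) K (strictLower K n) :=
  Module.Basis.ofEquivFun (slEquiv K n)

lemma toMatrix_lowerConj (g : Matrix (Fin n) (Fin n) K) (p q : SLIdx n) :
    LinearMap.toMatrix (slBasis K n) (slBasis K n) (lowerConj g) p q
      = g p.1.1 q.1.1 * g⁻¹ q.1.2 p.1.2 := by
  classical
  have hmem : Matrix.single q.1.1 q.1.2 (1:K) ∈ strictLower K n := by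
    intro i j hij
    rw [Matrix.single, Matrix.of_apply, if_neg]
    rintro ⟨h1, h2⟩
    subst h1; subst h2
    exact absurd q.2 (not_lt.mpr hij)
  have hE : (slEquiv K n).symm (Pi.single q 1)
      = (⟨Matrix.single q.1.1 q.1.2 (1:K), hmem⟩ : strictLower K n) := by
    rw [LinearEquiv.symm_apply_eq]
    funext r
    rw [slEquiv_apply, Pi.single_apply]
    show _ = Matrix.single q.1.1 q.1.2 (1:K) r.1.1 r.1.2
    rw [Matrix.single, Matrix.of_apply]
    by_cases he : r = q
    · subst he; simp
    · rw [if_neg he, if_neg]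
      rintro ⟨h1, h2⟩
      exact he (Subtype.ext (Prod.ext h1.symm h2.symm))
  rw [LinearMap.toMatrix_apply]
  rw [slBasis, Module.Basis.ofEquivFun_repr_apply, Module.Basis.coe_ofEquivFun]
  simp only []
  rw [hE]
  show lowerTrunc (g * Matrix.single q.1.1 q.1.2 (1:K) * g⁻¹) p.1.1 p.1.2 = _
  rw [lowerTrunc, Matrix.of_apply, if_pos p.2]
  rw [Matrix.mul_apply]
  rw [Finset.sum_eq_single q.1.2]
  · rw [Matrix.mul_apply, Finset.sum_eq_single q.1.1]
    · simp [Matrix.single]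
    · intro b _ hb; simp [Matrix.single, Ne.symm hb]
    · simp
  · intro b _ hb
    rw [Matrix.mul_apply]
    have : ∀ a, g p.1.1 a * Matrix.single q.1.1 q.1.2 (1:K) a b = 0 := by
      intro a; simp [Matrix.single, Ne.symm hb]
    simp [this]
  · simp

end Aux
section Aux2

variable {K : Type*} [Field K] {n : ℕ}

/-- Determinant of a matrix that is triangular with respect to a rank function. -/
lemma det_eq_prod_diag_of_rank {ι : Type*} [Fintype ι] [DecidableEq ι]
    (M : Matrix ι ι K) (r : ι → ℕ)
    (h : ∀ p q, M p q ≠ 0 → p ≠ q → r p < r q) :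
    M.det = ∏ p, M p p := by
  rw [Matrix.det_apply, Finset.sum_eq_single (1 : Equiv.Perm ι)]
  · simp
  · intro σ _ hσ
    suffices h0 : ∏ i, M (σ i) i = 0 by simp [h0]
    by_contra hne
    have hnz : ∀ i, M (σ i) i ≠ 0 := fun i hz =>
      hne (Finset.prod_eq_zero (Finset.mem_univ i) hz)
    obtain ⟨i0, hi0⟩ : ∃ i, σ i ≠ i := by
      by_contra hc
      push_neg at hc
      exact hσ (Equiv.ext hc)
    have hle : ∀ i ∈ Finset.univ, r (σ i) ≤ r i := by
      intro i _
      by_cases hi : σ i = i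
      · rw [hi]
      · exact le_of_lt (h (σ i) i (hnz i) hi)
    have hlt : ∑ i, r (σ i) < ∑ i, r i :=
      Finset.sum_lt_sum hle ⟨i0, Finset.mem_univ i0, h (σ i0) i0 (hnz i0) hi0⟩
    rw [Equiv.sum_comp σ r] at hlt
    exact lt_irrefl _ hlt
  · simp

/-- upper triangular * upper triangular, entrywise statement. -/
lemma upper_mul_upper (A B : Matrix (Fin n) (Fin n) K)
    (hA : ∀ i j, j < i → A i j = 0) (hB : ∀ i j, j < i → B i j = 0) :
    ∀ i j, j < i → (A * B) i j = 0 := by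
  intro i j hij
  rw [Matrix.mul_apply]
  apply Finset.sum_eq_zero
  intro k _
  by_cases hk : k < i
  · rw [hA i k hk, zero_mul]
  · rw [hB k j (lt_of_lt_of_le hij (le_of_not_gt hk)), mul_zero]

end Aux2
section Aux3

variable {K : Type*} [Field K] {n : ℕ}

lemma lower_mul_strict (A B : Matrix (Fin n) (Fin n) K)
    (hA : ∀ i j, i < j → A i j = 0) (hB : ∀ i j, i ≤ j → B i j = 0) :
    ∀ i j, i ≤ j → (A * B) i j = 0 := by
  intro i j hij
  rw [Matrix.mul_apply]
  apply Finset.sum_eq_zero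
  intro k _
  by_cases hk : i < k
  · rw [hA i k hk, zero_mul]
  · rw [hB k j (le_trans (le_of_not_gt hk) hij), mul_zero]

lemma strict_mul_lower (A B : Matrix (Fin n) (Fin n) K)
    (hA : ∀ i j, i ≤ j → A i j = 0) (hB : ∀ i j, i < j → B i j = 0) :
    ∀ i j, i ≤ j → (A * B) i j = 0 := by
  intro i j hij
  rw [Matrix.mul_apply]
  apply Finset.sum_eq_zero
  intro k _
  by_cases hk : i ≤ k
  · rw [hA i k hk, zero_mul]
  · rw [hB k j (lt_of_lt_of_le (lt_of_not_ge hk) hij), mul_zero]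

/-- `π ∘ Ad(a b) = (π ∘ Ad a) ∘ (π ∘ Ad b)` on `W` when `a, a⁻¹` are upper triangular. -/
lemma lowerTrunc_add (A B : Matrix (Fin n) (Fin n) K) :
    lowerTrunc (A + B) = lowerTrunc A + lowerTrunc B := by
  ext i j
  by_cases h : j < i <;> simp [lowerTrunc, Matrix.add_apply, h]

lemma lowerTrunc_eq_zero {B : Matrix (Fin n) (Fin n) K}
    (hB : ∀ i j : Fin n, j < i → B i j = 0) : lowerTrunc B = 0 := by
  ext i j
  by_cases h : j < i <;> simp [lowerTrunc, h, hB i j]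

lemma lowerConj_mul_upper (a b : Matrix (Fin n) (Fin n) K)
    (ha : ∀ i j : Fin n, j < i → a i j = 0) (ha' : ∀ i j : Fin n, j < i → a⁻¹ i j = 0) :
    lowerConj (a * b) = (lowerConj a).comp (lowerConj b) := by
  apply LinearMap.ext
  intro X
  apply Subtype.ext
  show lowerTrunc ((a * b) * (X : Matrix (Fin n) (Fin n) K) * (a * b)⁻¹)
      = lowerTrunc (a * (lowerTrunc (b * (X : Matrix (Fin n) (Fin n) K) * b⁻¹)) * a⁻¹)
  rw [Matrix.mul_inv_rev]
  set Y := b * (X : Matrix (Fin n) (Fin n) K) * b⁻¹ with hY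
  have key : a * b * (X : Matrix (Fin n) (Fin n) K) * (b⁻¹ * a⁻¹)
      = a * lowerTrunc Y * a⁻¹ + a * (Y - lowerTrunc Y) * a⁻¹ := by
    rw [← Matrix.add_mul, ← Matrix.mul_add, add_sub_cancel, hY]
    noncomm_ring
  rw [key]
  have hU : ∀ i j : Fin n, j < i → (a * (Y - lowerTrunc Y) * a⁻¹) i j = 0 := by
    have hYU : ∀ i j : Fin n, j < i → (Y - lowerTrunc Y) i j = 0 := by
      intro i j hij
      simp [lowerTrunc, Matrix.sub_apply, hij]
    exact upper_mul_upper _ a⁻¹ (upper_mul_upper a _ ha hYU) ha'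
  rw [lowerTrunc_add, lowerTrunc_eq_zero hU, add_zero]

/-- `π ∘ Ad(a b) = (π ∘ Ad a) ∘ (π ∘ Ad b)` on `W` when `b, b⁻¹` are lower triangular. -/
lemma lowerConj_mul_lower (a b : Matrix (Fin n) (Fin n) K)
    (hb : ∀ i j : Fin n, i < j → b i j = 0) (hb' : ∀ i j : Fin n, i < j → b⁻¹ i j = 0) :
    lowerConj (a * b) = (lowerConj a).comp (lowerConj b) := by
  apply LinearMap.ext
  intro X
  apply Subtype.ext
  show lowerTrunc ((a * b) * (X : Matrix (Fin n) (Fin n) K) * (a * b)⁻¹)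
      = lowerTrunc (a * (lowerTrunc (b * (X : Matrix (Fin n) (Fin n) K) * b⁻¹)) * a⁻¹)
  rw [Matrix.mul_inv_rev]
  have hYL : ∀ i j : Fin n, i ≤ j → (b * (X : Matrix (Fin n) (Fin n) K) * b⁻¹) i j = 0 :=
    strict_mul_lower _ b⁻¹ (lower_mul_strict b _ hb X.2) hb'
  have hYeq : lowerTrunc (b * (X : Matrix (Fin n) (Fin n) K) * b⁻¹)
      = b * (X : Matrix (Fin n) (Fin n) K) * b⁻¹ := by
    ext i j
    by_cases hij : j < i
    · simp [lowerTrunc, hij]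
    · simp [lowerTrunc, hij, (hYL i j (le_of_not_gt hij)).symm]
  rw [hYeq]
  have : a * b * (X : Matrix (Fin n) (Fin n) K) * (b⁻¹ * a⁻¹)
      = a * (b * (X : Matrix (Fin n) (Fin n) K) * b⁻¹) * a⁻¹ := by noncomm_ring
  rw [this]

end Aux3
section Aux4

variable {K : Type*} [Field K] {n : ℕ}

lemma inv_upper_triangular {u : Matrix (Fin n) (Fin n) K}
    (hu : ∀ i j : Fin n, j < i → u i j = 0) (hdet : IsUnit u.det) :
    ∀ i j : Fin n, j < i → u⁻¹ i j = 0 := by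
  letI := u.invertibleOfIsUnitDet hdet
  exact fun i j hij =>
    Matrix.blockTriangular_inv_of_blockTriangular (fun a b hab => hu a b hab) hij

lemma inv_lower_triangular {v : Matrix (Fin n) (Fin n) K}
    (hv : ∀ i j : Fin n, i < j → v i j = 0) (hdet : IsUnit v.det) :
    ∀ i j : Fin n, i < j → v⁻¹ i j = 0 := by
  letI := v.invertibleOfIsUnitDet hdet
  have : Matrix.BlockTriangular v (OrderDual.toDual : Fin n → (Fin n)ᵒᵈ) :=
    fun a b hab => hv a b hab
  exact fun i j hij => Matrix.blockTriangular_inv_of_blockTriangular this hij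

lemma det_upper_unipotent {u : Matrix (Fin n) (Fin n) K}
    (hu : ∀ i j : Fin n, j < i → u i j = 0) (hu1 : ∀ i, u i i = 1) : u.det = 1 := by
  rw [Matrix.det_of_upperTriangular (fun a b hab => hu a b hab)]
  simp [hu1]

lemma det_lower_unipotent {v : Matrix (Fin n) (Fin n) K}
    (hv : ∀ i j : Fin n, i < j → v i j = 0) (hv1 : ∀ i, v i i = 1) : v.det = 1 := by
  rw [Matrix.det_of_lowerTriangular v (fun a b hab => hv a b hab)]
  simp [hv1]

lemma inv_diag_one_upper {u : Matrix (Fin n) (Fin n) K}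
    (hu : ∀ i j : Fin n, j < i → u i j = 0) (hu1 : ∀ i, u i i = 1) (i : Fin n) :
    u⁻¹ i i = 1 := by
  have hdet : IsUnit u.det := by rw [det_upper_unipotent hu hu1]; exact isUnit_one
  have h1 : u * u⁻¹ = 1 := Matrix.mul_nonsing_inv u hdet
  have h2 := congrFun (congrFun h1 i) i
  rw [Matrix.mul_apply, Finset.sum_eq_single i] at h2
  · rw [hu1 i, one_mul] at h2
    rw [h2, Matrix.one_apply_eq]
  · intro k _ hk
    rcases lt_or_gt_of_ne hk with h | h
    · rw [hu i k h, zero_mul]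
    · rw [inv_upper_triangular hu hdet k i h, mul_zero]
  · simp

lemma inv_diag_one_lower {v : Matrix (Fin n) (Fin n) K}
    (hv : ∀ i j : Fin n, i < j → v i j = 0) (hv1 : ∀ i, v i i = 1) (i : Fin n) :
    v⁻¹ i i = 1 := by
  have hdet : IsUnit v.det := by rw [det_lower_unipotent hv hv1]; exact isUnit_one
  have h1 : v * v⁻¹ = 1 := Matrix.mul_nonsing_inv v hdet
  have h2 := congrFun (congrFun h1 i) i
  rw [Matrix.mul_apply, Finset.sum_eq_single i] at h2
  · rw [hv1 i, one_mul] at h2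
    rw [h2, Matrix.one_apply_eq]
  · intro k _ hk
    rcases lt_or_gt_of_ne hk with h | h
    · rw [inv_lower_triangular hv hdet k i h, mul_zero]
    · rw [hv i k h, zero_mul]
  · simp

lemma diag_inv {tvec : Fin n → K} (ht : ∀ i, tvec i ≠ 0) :
    (Matrix.diagonal tvec)⁻¹ = Matrix.diagonal (fun i => (tvec i)⁻¹) := by
  apply Matrix.inv_eq_right_inv
  rw [Matrix.diagonal_mul_diagonal]
  ext i j
  by_cases h : i = j
  · subst h; simp [mul_inv_cancel₀ (ht i)]
  · simp [Matrix.diagonal_apply_ne _ h, Matrix.one_apply_ne h]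

end Aux4
section Aux5

variable {K : Type*} [Field K] {n : ℕ}

lemma det_lowerConj_upper_unipotent {u : Matrix (Fin n) (Fin n) K}
    (hu : ∀ i j : Fin n, j < i → u i j = 0) (hu1 : ∀ i, u i i = 1) :
    LinearMap.det (lowerConj u) = 1 := by
  classical
  have hdet : IsUnit u.det := by rw [det_upper_unipotent hu hu1]; exact isUnit_one
  have hu' := inv_upper_triangular hu hdet
  rw [← LinearMap.det_toMatrix (slBasis K n)]
  rw [det_eq_prod_diag_of_rank _ (fun p : SLIdx n => (p.1.1 : ℕ) - (p.1.2 : ℕ))]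
  · apply Finset.prod_eq_one
    intro p _
    rw [toMatrix_lowerConj, hu1, inv_diag_one_upper hu hu1, one_mul]
  · intro p q hM hpq
    rw [toMatrix_lowerConj] at hM
    have h1 : (p.1.1 : ℕ) ≤ (q.1.1 : ℕ) := by
      by_contra hc
      push_neg at hc
      exact hM (by rw [hu p.1.1 q.1.1 (by exact_mod_cast hc), zero_mul])
    have h2 : (q.1.2 : ℕ) ≤ (p.1.2 : ℕ) := by
      by_contra hc
      push_neg at hc
      exact hM (by rw [hu' q.1.2 p.1.2 (by exact_mod_cast hc), mul_zero])
    have hp : (p.1.2 : ℕ) < (p.1.1 : ℕ) := p.2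
    have hq : (q.1.2 : ℕ) < (q.1.1 : ℕ) := q.2
    have hne : ¬((p.1.1 : ℕ) = (q.1.1 : ℕ) ∧ (p.1.2 : ℕ) = (q.1.2 : ℕ)) := by
      rintro ⟨a, b⟩
      exact hpq (Subtype.ext (Prod.ext (Fin.ext a) (Fin.ext b)))
    omega

lemma det_lowerConj_lower_unipotent {v : Matrix (Fin n) (Fin n) K}
    (hv : ∀ i j : Fin n, i < j → v i j = 0) (hv1 : ∀ i, v i i = 1) :
    LinearMap.det (lowerConj v) = 1 := by
  classical
  have hdet : IsUnit v.det := by rw [det_lower_unipotent hv hv1]; exact isUnit_one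
  have hv' := inv_lower_triangular hv hdet
  rw [← LinearMap.det_toMatrix (slBasis K n)]
  rw [← Matrix.det_transpose]
  rw [det_eq_prod_diag_of_rank _ (fun p : SLIdx n => (p.1.1 : ℕ) - (p.1.2 : ℕ))]
  · apply Finset.prod_eq_one
    intro p _
    rw [Matrix.transpose_apply, toMatrix_lowerConj, hv1, inv_diag_one_lower hv hv1, one_mul]
  · intro p q hM hpq
    rw [Matrix.transpose_apply, toMatrix_lowerConj] at hM
    have h1 : (p.1.1 : ℕ) ≤ (q.1.1 : ℕ) := by
      by_contra hc
      push_neg at hc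
      exact hM (by rw [hv q.1.1 p.1.1 (by exact_mod_cast hc), zero_mul])
    have h2 : (q.1.2 : ℕ) ≤ (p.1.2 : ℕ) := by
      by_contra hc
      push_neg at hc
      exact hM (by rw [hv' p.1.2 q.1.2 (by exact_mod_cast hc), mul_zero])
    have hp : (p.1.2 : ℕ) < (p.1.1 : ℕ) := p.2
    have hq : (q.1.2 : ℕ) < (q.1.1 : ℕ) := q.2
    have hne : ¬((p.1.1 : ℕ) = (q.1.1 : ℕ) ∧ (p.1.2 : ℕ) = (q.1.2 : ℕ)) := by
      rintro ⟨a, b⟩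
      exact hpq (Subtype.ext (Prod.ext (Fin.ext a) (Fin.ext b)))
    omega

lemma det_lowerConj_diagonal {tvec : Fin n → K} (ht : ∀ i, tvec i ≠ 0) :
    LinearMap.det (lowerConj (Matrix.diagonal tvec))
      = ∏ p : SLIdx n, tvec p.1.1 * (tvec p.1.2)⁻¹ := by
  classical
  rw [← LinearMap.det_toMatrix (slBasis K n)]
  have hMx : LinearMap.toMatrix (slBasis K n) (slBasis K n) (lowerConj (Matrix.diagonal tvec))
      = Matrix.diagonal (fun p : SLIdx n => tvec p.1.1 * (tvec p.1.2)⁻¹) := by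
    ext p q
    rw [toMatrix_lowerConj, diag_inv ht]
    by_cases h : p = q
    · subst h
      rw [Matrix.diagonal_apply_eq, Matrix.diagonal_apply_eq, Matrix.diagonal_apply_eq]
    · rw [Matrix.diagonal_apply_ne _ h]
      by_cases h1 : p.1.1 = q.1.1
      · have h2 : q.1.2 ≠ p.1.2 := by
          intro hc
          exact h (Subtype.ext (Prod.ext h1 hc.symm))
        rw [Matrix.diagonal_apply_ne _ h2, mul_zero]
      · rw [Matrix.diagonal_apply_ne _ h1, zero_mul]
  rw [hMx, Matrix.det_diagonal]

end Aux5

/-- Example 1.1 of the paper (Borel case of Lemma 1.1 (2)) for `GL(n)`: if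
`g = u · t · v` with `u` upper-triangular unipotent, `t = diagonal tvec` invertible
diagonal and `v` lower-triangular unipotent, then the determinant of
`X ↦ π (g X g⁻¹)` on strictly lower-triangular matrices is `∏_{i > j} tᵢ t_j⁻¹`. -/
theorem det_lowerConj_triangular {K : Type*} [Field K] {n : ℕ} (hn : 0 < n)
    (u v : Matrix (Fin n) (Fin n) K) (tvec : Fin n → K)
    (hu : ∀ i j : Fin n, j < i → u i j = 0) (hu1 : ∀ i, u i i = 1)
    (hv : ∀ i j : Fin n, i < j → v i j = 0) (hv1 : ∀ i, v i i = 1)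
    (ht : ∀ i, tvec i ≠ 0) :
    LinearMap.det (lowerConj (u * Matrix.diagonal tvec * v))
      = ∏ p ∈ Finset.univ.filter (fun p : Fin n × Fin n => p.2 < p.1),
          tvec p.1 * (tvec p.2)⁻¹ := by
  classical
  have hdetu : IsUnit u.det := by rw [det_upper_unipotent hu hu1]; exact isUnit_one
  have hdetv : IsUnit v.det := by rw [det_lower_unipotent hv hv1]; exact isUnit_one
  have hu' := inv_upper_triangular hu hdetu
  have hv' := inv_lower_triangular hv hdetv
  rw [mul_assoc]
  rw [lowerConj_mul_upper u _ hu hu', LinearMap.det_comp]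
  rw [lowerConj_mul_lower (Matrix.diagonal tvec) v hv hv', LinearMap.det_comp]
  rw [det_lowerConj_upper_unipotent hu hu1, det_lowerConj_lower_unipotent hv hv1,
    det_lowerConj_diagonal ht, one_mul, mul_one]
  rw [Finset.prod_subtype (p := fun p : Fin n × Fin n => p.2 < p.1) (Finset.univ.filter (fun p : Fin n × Fin n => p.2 < p.1))
    (fun x => by simp) (fun p : Fin n × Fin n => tvec p.1 * (tvec p.2)⁻¹)]
end

section
/- Let K be a field and n a positive integer. Let σ be a non-identity permutation of {1, …, n} with permutation matrix P_σ, and let g = u · P_σ · t · v ∈ GL(n, K), where u is upper-triangular unipotent, t is an invertible diagonal matrix, and v is lower-triangular unipotent. Let W be the subspace of M_n(K) of strictly lower-triangular matrices, and let π : M_n(K) → W be the projection along the span of the elementary matrices E_{pq} with p ≤ q. Then the determinant of the linear endomorphism X ↦ π(g X g⁻¹) of W equals 0. -/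
open Matrix

private lemma sandwich {K : Type*} [Field K] {n : ℕ} (A B : Matrix (Fin n) (Fin n) K)
    (i j a b : Fin n) :
    (A * Matrix.single i j (1 : K) * B) a b = A a i * B j b := by
  rw [Matrix.mul_assoc, Matrix.mul_apply]
  rw [Finset.sum_eq_single i]
  · simp
  · intro k _ hk
    rw [Matrix.single_mul_apply_of_ne (i := i) (j := j) (a := k) (b := b) (h := hk), mul_zero]
  · simp

/-- Example 1.1 of the paper (Borel case of Lemma 1.1 (3)) for `GL(n)`: if
`g = u · P_σ · t · v` with `σ` a non-identity permutation, `u` upper-triangular unipotent,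
`t` invertible diagonal, and `v` lower-triangular unipotent, then the determinant of
`X ↦ π (g X g⁻¹)` on strictly lower-triangular matrices vanishes. -/
theorem det_lowerConj_bruhatCell_eq_zero {K : Type*} [Field K] {n : ℕ} (hn : 0 < n)
    (σ : Equiv.Perm (Fin n)) (hσ : σ ≠ 1)
    (u v : Matrix (Fin n) (Fin n) K) (tvec : Fin n → K)
    (hu : ∀ i j : Fin n, j < i → u i j = 0) (hu1 : ∀ i, u i i = 1)
    (hv : ∀ i j : Fin n, i < j → v i j = 0) (hv1 : ∀ i, v i i = 1)
    (ht : ∀ i, tvec i ≠ 0) :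
    LinearMap.det (lowerConj (u * σ.permMatrix K * Matrix.diagonal tvec * v)) = 0 := by
  classical
  -- Step 1: an inversion of σ⁻¹
  obtain ⟨i, j, hji, hinv⟩ : ∃ i j : Fin n, j < i ∧ σ⁻¹ i < σ⁻¹ j := by
    by_contra hcon
    push_neg at hcon
    apply hσ
    have hmono : StrictMono (fun x => σ⁻¹ x : Fin n → Fin n) := by
      intro a b hab
      rcases lt_or_eq_of_le (hcon b a hab) with h | h
      · exact h
      · exact absurd (σ⁻¹.injective h) (ne_of_lt hab)
    have hrange : Set.range (fun x => σ⁻¹ x : Fin n → Fin n) = Set.range (id : Fin n → Fin n) := by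
      rw [Set.range_id]
      exact Set.range_eq_univ.mpr σ⁻¹.surjective
    haveI : WellFoundedLT (Fin n) := inferInstance
    have hid : (fun x => σ⁻¹ x : Fin n → Fin n) = id :=
      (StrictMono.range_inj (β := Fin n) (γ := Fin n) hmono
        (show StrictMono (id : Fin n → Fin n) from fun _ _ h => h)).mp hrange
    have : σ⁻¹ = 1 := Equiv.ext fun x => congrFun hid x
    rwa [inv_eq_one] at this
  set P : Matrix (Fin n) (Fin n) K := σ.permMatrix K with hP
  set T : Matrix (Fin n) (Fin n) K := Matrix.diagonal tvec with hT
  set P' : Matrix (Fin n) (Fin n) K := (σ⁻¹).permMatrix K with hP'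
  set T' : Matrix (Fin n) (Fin n) K := Matrix.diagonal (fun k => (tvec k)⁻¹) with hT'
  set g : Matrix (Fin n) (Fin n) K := u * P * T * v with hg
  -- triangularity and determinants
  have hub : u.BlockTriangular id := fun a b h => hu a b h
  have hvb : v.BlockTriangular OrderDual.toDual := fun a b h => hv a b h
  have hdetu : u.det = 1 := by
    rw [Matrix.det_of_upperTriangular hub]
    simp [hu1]
  have hdetv : v.det = 1 := by
    rw [Matrix.det_of_lowerTriangular v hvb]
    simp [hv1]
  haveI : Invertible u := u.invertibleOfIsUnitDet (by simp [hdetu])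
  haveI : Invertible v := v.invertibleOfIsUnitDet (by simp [hdetv])
  have huinv : ∀ p q : Fin n, q < p → u⁻¹ p q = 0 :=
    fun p q h => Matrix.blockTriangular_inv_of_blockTriangular hub h
  have hvinv : ∀ p q : Fin n, p < q → v⁻¹ p q = 0 :=
    fun p q h => Matrix.blockTriangular_inv_of_blockTriangular hvb h
  have hvv : v * v⁻¹ = 1 := Matrix.mul_nonsing_inv v (by simp [hdetv])
  have hvv' : v⁻¹ * v = 1 := Matrix.nonsing_inv_mul v (by simp [hdetv])
  have huu : u * u⁻¹ = 1 := Matrix.mul_nonsing_inv u (by simp [hdetu])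
  have hTT : T * T' = 1 := by
    rw [hT, hT', Matrix.diagonal_mul_diagonal]
    rw [show (fun k => tvec k * (tvec k)⁻¹) = fun _ => (1 : K) from
      funext fun k => mul_inv_cancel₀ (ht k)]
    exact Matrix.diagonal_one
  have hPP : P * P' = 1 := by
    rw [hP, hP', Equiv.Perm.permMatrix, Equiv.Perm.permMatrix, ← PEquiv.toMatrix_trans,
      ← Equiv.toPEquiv_trans]
    have : σ.trans σ⁻¹ = Equiv.refl (Fin n) := by
      ext x; simp
    rw [this, Equiv.toPEquiv_refl, PEquiv.toMatrix_refl]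
  -- the inverse of g
  have hginv : g⁻¹ = v⁻¹ * T' * P' * u⁻¹ := by
    apply Matrix.inv_eq_right_inv
    rw [hg]
    simp only [Matrix.mul_assoc]
    rw [show v * (v⁻¹ * (T' * (P' * u⁻¹))) = T' * (P' * u⁻¹) from by
      rw [← Matrix.mul_assoc, hvv, Matrix.one_mul]]
    rw [show T * (T' * (P' * u⁻¹)) = P' * u⁻¹ from by
      rw [← Matrix.mul_assoc, hTT, Matrix.one_mul]]
    rw [show P * (P' * u⁻¹) = u⁻¹ from by
      rw [← Matrix.mul_assoc, hPP, Matrix.one_mul]]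
    exact huu
  -- the kernel element
  set E : Matrix (Fin n) (Fin n) K := Matrix.single i j (1 : K) with hE
  set X : Matrix (Fin n) (Fin n) K := v⁻¹ * E * v with hX
  have hXmem : X ∈ strictLower K n := by
    intro a b hab
    have hXab : X a b = v⁻¹ a i * v j b := sandwich v⁻¹ v i j a b
    rw [hXab]
    rcases lt_or_ge a i with h | h
    · rw [hvinv a i h, zero_mul]
    · rw [hv j b (lt_of_lt_of_le hji (le_trans h hab)), mul_zero]
  have hXne : X ≠ 0 := by
    intro h0
    have hEX : v * X * v⁻¹ = E := by
      rw [hX]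
      simp only [Matrix.mul_assoc]
      rw [show v⁻¹ * (E * (v * v⁻¹)) = v⁻¹ * E from by rw [hvv, Matrix.mul_one],
        ← Matrix.mul_assoc, hvv, Matrix.one_mul]
    rw [h0, Matrix.mul_zero, Matrix.zero_mul] at hEX
    have : E i j = (1 : K) := by simp [hE]
    rw [← hEX] at this
    simp at this
  -- the kernel element maps to zero
  have hker : lowerConj g ⟨X, hXmem⟩ = 0 := by
    apply Subtype.ext
    show lowerTrunc (g * X * g⁻¹) = 0
    have hM : g * X * g⁻¹ = (u * P * T) * E * (T' * (P' * u⁻¹)) := by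
      rw [hginv, hg, hX]
      simp only [Matrix.mul_assoc]
      rw [show v * (v⁻¹ * (E * (v * (v⁻¹ * (T' * (P' * u⁻¹)))))) =
          E * (v * (v⁻¹ * (T' * (P' * u⁻¹)))) from by
        rw [← Matrix.mul_assoc, hvv, Matrix.one_mul]]
      rw [show v * (v⁻¹ * (T' * (P' * u⁻¹))) = T' * (P' * u⁻¹) from by
        rw [← Matrix.mul_assoc, hvv, Matrix.one_mul]]
    rw [hM]
    ext a b
    simp only [lowerTrunc, Matrix.of_apply, Matrix.zero_apply]
    split_ifs with hba
    · have hab : ((u * P * T) * E * (T' * (P' * u⁻¹))) a b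
          = (u * P * T) a i * (T' * (P' * u⁻¹)) j b := by
        rw [hE, ← Matrix.mul_assoc (T') (P') (u⁻¹)]
        exact sandwich (u * P * T) (T' * P' * u⁻¹) i j a b
      rw [hab]
      have h1 : (u * P * T) a i = u a (σ⁻¹ i) * tvec i := by
        rw [hT, Matrix.mul_diagonal, hP, Equiv.Perm.permMatrix,
          PEquiv.mul_toMatrix_toPEquiv, Matrix.submatrix_apply, id]
        rfl
      have h2 : (T' * (P' * u⁻¹)) j b = (tvec j)⁻¹ * u⁻¹ (σ⁻¹ j) b := by
        rw [hP', Equiv.Perm.permMatrix, PEquiv.toMatrix_toPEquiv_mul, hT',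
          Matrix.diagonal_mul, Matrix.submatrix_apply, id]
      rw [h1, h2]
      rcases lt_or_ge (σ⁻¹ i) a with h | h
      · rw [hu a (σ⁻¹ i) h, zero_mul, zero_mul]
      · have : b < σ⁻¹ j := lt_of_lt_of_le hba (le_trans h (le_of_lt hinv))
        rw [huinv (σ⁻¹ j) b this, mul_zero, mul_zero]
    · rfl
  -- conclude
  by_contra hdet
  have hinj : Function.Injective (lowerConj g) := by
    intro x y hxy
    exact ((lowerConj g).equivOfDetNeZero hdet).injective (by simpa using hxy)
  have : (⟨X, hXmem⟩ : strictLower K n) = 0 := hinj (by rw [hker, map_zero])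
  exact hXne (congrArg Subtype.val this)
end
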